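/- For every regular language L over a finite alphabet Σ, the Parikh image p(L) = {p(w) | w ∈ L} is a semi-linear subset of ℕ^|Σ|, where p(w) counts the occurrences of each letter of Σ in w (Parikh's theorem restricted to regular languages). -/

import Mathlib

/-- A linear subset of `ℕ^d`: all vectors `b₀ + z₁•b₁ + ... + z_ℓ•b_ℓ`. -/
def IsLinear {d : ℕ} (S : Set (Fin d → ℕ)) : Prop :=
  ∃ (b₀ : Fin d → ℕ) (ℓ : ℕ) (b : Fin ℓ → Fin d → ℕ),
    S = {v | ∃ z : Fin ℓ → ℕ, v = b₀ + ∑ i, z i • b i}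

/-- A semi-linear subset of `ℕ^d`: a finite union of linear sets. -/
def IsSemilinear {d : ℕ} (S : Set (Fin d → ℕ)) : Prop :=
  ∃ (n : ℕ) (T : Fin n → Set (Fin d → ℕ)), (∀ i, IsLinear (T i)) ∧ S = ⋃ i, T i

/-- The number of input-consuming steps among the first `i` steps. -/
def readCount (reads : ℕ → Bool) (i : ℕ) : ℕ :=
  ((Finset.range i).filter (fun j => reads j = true)).card

/-- A run of an ε-free vector-labeled automaton on the infinite word `α`:
`p` is the state sequence, `v i` the vector of the `i`-th transition. -/
def IsRun {Q Sig : Type} {d : ℕ} (q0 : Q) (Δ : Set (Q × Sig × (Fin d → ℕ) × Q))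
    (α : ℕ → Sig) (p : ℕ → Q) (v : ℕ → Fin d → ℕ) : Prop :=
  p 0 = q0 ∧ ∀ i, (p i, α i, v i, p (i + 1)) ∈ Δ

/-- A run of an automaton with ε-transitions `E` on the infinite word `α`;
`reads i = true` iff the `i`-th transition consumes an input symbol, and
infinitely many transitions must consume a symbol. -/
def IsEpsRun {Q Sig : Type} {d : ℕ} (q0 : Q) (Δ : Set (Q × Sig × (Fin d → ℕ) × Q))
    (E : Set (Q × (Fin d → ℕ) × Q)) (α : ℕ → Sig) (p : ℕ → Q) (v : ℕ → Fin d → ℕ)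
    (reads : ℕ → Bool) : Prop :=
  p 0 = q0 ∧ (∀ N, ∃ i, N ≤ i ∧ reads i = true) ∧
    ∀ i, if reads i then (p i, α (readCount reads i), v i, p (i + 1)) ∈ Δ
      else (p i, v i, p (i + 1)) ∈ E

/-- Prefix-acceptance: infinitely many positions `n ≥ 1` where the current state is
accepting and the accumulated vector sum lies in the (state-dependent) semi-linear set. -/
def PrefixCond {Q : Type} {d : ℕ} (F : Set Q) (C : Q → Set (Fin d → ℕ))
    (p : ℕ → Q) (v : ℕ → Fin d → ℕ) : Prop :=
  ∀ N, ∃ n, N ≤ n ∧ 1 ≤ n ∧ p n ∈ F ∧ (∑ j ∈ Finset.range n, v j) ∈ C (p n)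

/-- Weak reset-acceptance: there are infinitely many reset positions `0 = k 0 < k 1 < ...`
such that each `p (k (i+1))` is accepting and the vector sum between consecutive
reset positions lies in the corresponding semi-linear set. -/
def WeakCond {Q : Type} {d : ℕ} (F : Set Q) (C : Q → Set (Fin d → ℕ))
    (p : ℕ → Q) (v : ℕ → Fin d → ℕ) : Prop :=
  ∃ k : ℕ → ℕ, k 0 = 0 ∧ StrictMono k ∧
    ∀ i, p (k (i + 1)) ∈ F ∧
      (∑ j ∈ Finset.Ico (k i) (k (i + 1)), v j) ∈ C (p (k (i + 1)))

/-- Strong reset-acceptance: `k 1 < k 2 < ...` enumerates *all* positions `n ≥ 1` of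
accepting states (so there are infinitely many), and the vector sum between any two
consecutive such positions (with `k 0 = 0`) lies in the corresponding semi-linear set. -/
def StrongCond {Q : Type} {d : ℕ} (F : Set Q) (C : Q → Set (Fin d → ℕ))
    (p : ℕ → Q) (v : ℕ → Fin d → ℕ) : Prop :=
  ∃ k : ℕ → ℕ, k 0 = 0 ∧ StrictMono k ∧
    (∀ n, 1 ≤ n → (p n ∈ F ↔ ∃ i, 1 ≤ i ∧ k i = n)) ∧
    ∀ i, (∑ j ∈ Finset.Ico (k i) (k (i + 1)), v j) ∈ C (p (k (i + 1)))

/-- A Parikh(-Büchi) automaton of dimension `d` (also used as a Parikh automaton on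
finite words): finitely many states, vector-labeled transitions, a semi-linear set `C`. -/
structure PBA (Sig : Type) (d : ℕ) where
  Q : Type
  fin : Fintype Q
  q0 : Q
  Δ : Set (Q × Sig × (Fin d → ℕ) × Q)
  F : Set Q
  C : Set (Fin d → ℕ)

attribute [instance] PBA.fin

/-- `P_ω(A)`: the ω-language recognized under prefix-acceptance (PPBA). -/
def PBA.PrefixLang {Sig d} (A : PBA Sig d) : Set (ℕ → Sig) :=
  {α | ∃ p v, IsRun A.q0 A.Δ α p v ∧ PrefixCond A.F (fun _ => A.C) p v}

/-- `W_ω(A)`: the ω-language recognized under weak reset-acceptance (WPBA). -/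
def PBA.WeakLang {Sig d} (A : PBA Sig d) : Set (ℕ → Sig) :=
  {α | ∃ p v, IsRun A.q0 A.Δ α p v ∧ WeakCond A.F (fun _ => A.C) p v}

/-- `S_ω(A)`: the ω-language recognized under strong reset-acceptance (SPBA). -/
def PBA.StrongLang {Sig d} (A : PBA Sig d) : Set (ℕ → Sig) :=
  {α | ∃ p v, IsRun A.q0 A.Δ α p v ∧ StrongCond A.F (fun _ => A.C) p v}

/-- Acceptance of a finite word by a Parikh automaton. -/
def PBA.FinAccepts {Sig d} (A : PBA Sig d) (w : List Sig) : Prop :=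
  ∃ (p : ℕ → A.Q) (v : ℕ → Fin d → ℕ),
    p 0 = A.q0 ∧ (∀ i : Fin w.length, (p i, w.get i, v i, p (i + 1)) ∈ A.Δ) ∧
    p w.length ∈ A.F ∧ (∑ j ∈ Finset.range w.length, v j) ∈ A.C

/-- `L(A)`: the language of finite words recognized by a Parikh automaton. -/
def PBA.FinLang {Sig d} (A : PBA Sig d) : Set (List Sig) := {w | A.FinAccepts w}

/-- A Parikh-Büchi automaton with ε-transitions. -/
structure EpsPBA (Sig : Type) (d : ℕ) where
  Q : Type
  fin : Fintype Q
  q0 : Q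
  Δ : Set (Q × Sig × (Fin d → ℕ) × Q)
  E : Set (Q × (Fin d → ℕ) × Q)
  F : Set Q
  C : Set (Fin d → ℕ)

attribute [instance] EpsPBA.fin

def EpsPBA.PrefixLang {Sig d} (A : EpsPBA Sig d) : Set (ℕ → Sig) :=
  {α | ∃ p v reads, IsEpsRun A.q0 A.Δ A.E α p v reads ∧ PrefixCond A.F (fun _ => A.C) p v}

def EpsPBA.WeakLang {Sig d} (A : EpsPBA Sig d) : Set (ℕ → Sig) :=
  {α | ∃ p v reads, IsEpsRun A.q0 A.Δ A.E α p v reads ∧ WeakCond A.F (fun _ => A.C) p v}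

def EpsPBA.StrongLang {Sig d} (A : EpsPBA Sig d) : Set (ℕ → Sig) :=
  {α | ∃ p v reads, IsEpsRun A.q0 A.Δ A.E α p v reads ∧ StrongCond A.F (fun _ => A.C) p v}

/-- A Multi-PBA: every (accepting) state carries its own semi-linear set. -/
structure MPBA (Sig : Type) (d : ℕ) where
  Q : Type
  fin : Fintype Q
  q0 : Q
  Δ : Set (Q × Sig × (Fin d → ℕ) × Q)
  F : Set Q
  C : Q → Set (Fin d → ℕ)

attribute [instance] MPBA.fin

def MPBA.PrefixLang {Sig d} (A : MPBA Sig d) : Set (ℕ → Sig) :=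
  {α | ∃ p v, IsRun A.q0 A.Δ α p v ∧ PrefixCond A.F A.C p v}

/-- A Multi-PBA with ε-transitions. -/
structure EpsMPBA (Sig : Type) (d : ℕ) where
  Q : Type
  fin : Fintype Q
  q0 : Q
  Δ : Set (Q × Sig × (Fin d → ℕ) × Q)
  E : Set (Q × (Fin d → ℕ) × Q)
  F : Set Q
  C : Q → Set (Fin d → ℕ)

attribute [instance] EpsMPBA.fin

def EpsMPBA.StrongLang {Sig d} (A : EpsMPBA Sig d) : Set (ℕ → Sig) :=
  {α | ∃ p v reads, IsEpsRun A.q0 A.Δ A.E α p v reads ∧ StrongCond A.F A.C p v}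

/-- A language of finite words is Parikh-recognizable. -/
def ParikhRec {Sig : Type} (L : Set (List Sig)) : Prop :=
  ∃ d, ∃ A : PBA Sig d, IsSemilinear A.C ∧ A.FinLang = L

/-- An ω-language is PPBA-recognizable. -/
def PPBARec {Sig : Type} (L : Set (ℕ → Sig)) : Prop :=
  ∃ d, ∃ A : PBA Sig d, IsSemilinear A.C ∧ A.PrefixLang = L

/-- An ω-language is SPBA-recognizable. -/
def SPBARec {Sig : Type} (L : Set (ℕ → Sig)) : Prop :=
  ∃ d, ∃ A : PBA Sig d, IsSemilinear A.C ∧ A.StrongLang = L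

/-- Concatenation of a language of finite words with an ω-language. -/
def CatLang {Sig : Type} (L₁ : Set (List Sig)) (L₂ : Set (ℕ → Sig)) : Set (ℕ → Sig) :=
  {α | ∃ u ∈ L₁, ∃ β ∈ L₂,
    (∀ i : Fin u.length, α i = u.get i) ∧ ∀ n, β n = α (u.length + n)}

/-- `α` is the concatenation `w 0 ++ w 1 ++ w 2 ++ ⋯` of the finite words `w i`. -/
def IsOmegaConcat {Sig : Type} (w : ℕ → List Sig) (α : ℕ → Sig) : Prop :=
  ∀ n : ℕ, ∀ i : Fin (((List.range n).map w).flatten.length),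
    ((List.range n).map w).flatten.get i = α i

/-- The ω-power `L^ω = {w₁w₂w₃⋯ ∣ w_i ∈ L ∖ {ε}}`. -/
def OmegaPower {Sig : Type} (L : Set (List Sig)) : Set (ℕ → Sig) :=
  {α | ∃ w : ℕ → List Sig, (∀ i, w i ∈ L) ∧ (∀ i, w i ≠ []) ∧ IsOmegaConcat w α}

/-- Kleene star of a set of finite words. -/
def ListStar {Sig : Type} (L : Set (List Sig)) : Set (List Sig) :=
  {w | ∃ ws : List (List Sig), (∀ u ∈ ws, u ∈ L) ∧ w = ws.flatten}

/-- A (nondeterministic) Büchi automaton. -/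
structure BuchiNFA (Sig : Type) where
  Q : Type
  fin : Fintype Q
  q0 : Q
  Δ : Set (Q × Sig × Q)
  F : Set Q

attribute [instance] BuchiNFA.fin

def BuchiNFA.Lang {Sig} (B : BuchiNFA Sig) : Set (ℕ → Sig) :=
  {α | ∃ p : ℕ → B.Q, p 0 = B.q0 ∧ (∀ i, (p i, α i, p (i + 1)) ∈ B.Δ) ∧
    ∀ N, ∃ n, N ≤ n ∧ p n ∈ B.F}

/-- An ω-language is ω-regular if it is recognized by a Büchi automaton. -/
def OmegaRegular {Sig : Type} (R : Set (ℕ → Sig)) : Prop := ∃ B : BuchiNFA Sig, B.Lang = R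

/-- A blind `k`-counter machine: transitions are labeled by a letter or ε (`Option Sig`)
and an integer vector. -/
structure CM (Sig : Type) (k : ℕ) where
  Q : Type
  fin : Fintype Q
  q0 : Q
  Δ : Set (Q × Option Sig × (Fin k → ℤ) × Q)
  F : Set Q

attribute [instance] CM.fin

/-- The ω-language of a blind counter machine: some run reads every symbol of `α`
and is infinitely often in an accepting state with all counters equal to `0`. -/
def CM.Lang {Sig k} (M : CM Sig k) : Set (ℕ → Sig) :=
  {α | ∃ (p : ℕ → M.Q) (v : ℕ → Fin k → ℤ) (reads : ℕ → Bool),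
    p 0 = M.q0 ∧ (∀ N, ∃ i, N ≤ i ∧ reads i = true) ∧
    (∀ i, if reads i then (p i, some (α (readCount reads i)), v i, p (i + 1)) ∈ M.Δ
      else (p i, (none : Option Sig), v i, p (i + 1)) ∈ M.Δ) ∧
    ∀ N, ∃ n, N ≤ n ∧ p n ∈ M.F ∧ (∑ j ∈ Finset.range n, v j) = 0}
namespace ParikhAux

open Pointwise Set
local notation "Cl" => AddSubmonoid.closure

variable {d : ℕ}

def IsLinear' {d : ℕ} (S : Set (Fin d → ℕ)) : Prop :=
  ∃ (b₀ : Fin d → ℕ) (ℓ : ℕ) (b : Fin ℓ → Fin d → ℕ),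
    S = {v | ∃ z : Fin ℓ → ℕ, v = b₀ + ∑ i, z i • b i}

lemma mem_closure_range_iff {ι : Type} [Fintype ι] (b : ι → Fin d → ℕ) (s : Fin d → ℕ) :
    s ∈ Cl (Set.range b) ↔ ∃ z : ι → ℕ, s = ∑ i, z i • b i := by
  classical
  constructor
  · intro h
    induction h using AddSubmonoid.closure_induction with
    | mem x hx =>
      obtain ⟨i, rfl⟩ := hx
      exact ⟨fun j => if j = i then 1 else 0, by simp [ite_smul]⟩
    | zero => exact ⟨0, by simp⟩
    | add x y hx hy ihx ihy =>
      obtain ⟨z, rfl⟩ := ihx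
      obtain ⟨z', rfl⟩ := ihy
      exact ⟨z + z', by simp [add_smul, Finset.sum_add_distrib]⟩
  · rintro ⟨z, rfl⟩
    exact AddSubmonoid.sum_mem _ fun i _ => (Cl (Set.range b)).nsmul_mem (AddSubmonoid.subset_closure (Set.mem_range_self i)) _

lemma isLinear'_iff (S : Set (Fin d → ℕ)) :
    IsLinear' S ↔ ∃ (b₀ : Fin d → ℕ) (ι : Type) (_ : Fintype ι) (g : ι → Fin d → ℕ),
      S = {v | ∃ t ∈ Cl (Set.range g), v = b₀ + t} := by
  constructor
  · rintro ⟨b₀, ℓ, b, rfl⟩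
    refine ⟨b₀, Fin ℓ, inferInstance, b, ?_⟩
    ext v
    simp only [Set.mem_setOf_eq, mem_closure_range_iff]
    constructor
    · rintro ⟨z, rfl⟩; exact ⟨_, ⟨z, rfl⟩, rfl⟩
    · rintro ⟨t, ⟨z, rfl⟩, rfl⟩; exact ⟨z, rfl⟩
  · rintro ⟨b₀, ι, _, g, rfl⟩
    refine ⟨b₀, Fintype.card ι, g ∘ (Fintype.equivFin ι).symm, ?_⟩
    ext v
    simp only [Set.mem_setOf_eq, mem_closure_range_iff]
    have key : ∀ z : Fin (Fintype.card ι) → ℕ,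
        ∑ j, z j • g ((Fintype.equivFin ι).symm j)
          = ∑ i, (z ((Fintype.equivFin ι) i)) • g i := by
      intro z
      exact Fintype.sum_equiv (Fintype.equivFin ι).symm _ _ fun j => by simp
    constructor
    · rintro ⟨t, ⟨z, rfl⟩, rfl⟩
      refine ⟨z ∘ (Fintype.equivFin ι).symm, ?_⟩
      simp only [Function.comp]
      rw [key]
      simp
    · rintro ⟨z, rfl⟩
      refine ⟨∑ j, z j • g ((Fintype.equivFin ι).symm j),
        ⟨fun i => z ((Fintype.equivFin ι) i), (key z).symm ▸ rfl⟩, by simp only [Function.comp_apply]⟩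


def IsSemilinear' {d : ℕ} (S : Set (Fin d → ℕ)) : Prop :=
  ∃ (n : ℕ) (T : Fin n → Set (Fin d → ℕ)), (∀ i, IsLinear' (T i)) ∧ S = ⋃ i, T i

lemma isSemilinear'_iUnion_linear {ι : Type} [Fintype ι] (T : ι → Set (Fin d → ℕ))
    (h : ∀ i, IsLinear' (T i)) : IsSemilinear' (⋃ i, T i) := by
  refine ⟨Fintype.card ι, T ∘ (Fintype.equivFin ι).symm, fun i => h _, ?_⟩
  ext x
  simp only [Set.mem_iUnion, Function.comp_apply]
  exact ⟨fun ⟨i, hi⟩ => ⟨Fintype.equivFin ι i, by simpa⟩, fun ⟨j, hj⟩ => ⟨_, hj⟩⟩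

lemma isSemilinear'_iUnion {ι : Type} [Fintype ι] (T : ι → Set (Fin d → ℕ))
    (h : ∀ i, IsSemilinear' (T i)) : IsSemilinear' (⋃ i, T i) := by
  choose n U hU hTU using h
  have : (⋃ i, T i) = ⋃ p : Σ i : ι, Fin (n i), U p.1 p.2 := by
    ext x
    simp only [Set.mem_iUnion, Sigma.exists]
    constructor
    · rintro ⟨i, hi⟩
      rw [hTU i] at hi
      obtain ⟨j, hj⟩ := Set.mem_iUnion.mp hi
      exact ⟨i, j, hj⟩
    · rintro ⟨i, j, hj⟩
      exact ⟨i, (hTU i) ▸ Set.mem_iUnion.mpr ⟨j, hj⟩⟩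
  rw [this]
  exact isSemilinear'_iUnion_linear _ fun p => hU p.1 p.2

lemma isSemilinear'_empty : IsSemilinear' (∅ : Set (Fin d → ℕ)) :=
  ⟨0, Fin.elim0, fun i => i.elim0, by simp⟩

lemma isSemilinear'_union {S T : Set (Fin d → ℕ)} (hS : IsSemilinear' S)
    (hT : IsSemilinear' T) : IsSemilinear' (S ∪ T) := by
  have : S ∪ T = ⋃ b : Bool, (if b then S else T) := by
    ext x; simp [Set.mem_iUnion, or_comm]
  rw [this]
  exact isSemilinear'_iUnion _ (by rintro (_ | _) <;> simpa)

lemma isLinear'_singleton (v : Fin d → ℕ) : IsLinear' ({v} : Set (Fin d → ℕ)) := by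
  refine ⟨v, 0, Fin.elim0, ?_⟩
  ext x
  simp [eq_comm]

lemma isSemilinear'_of_finite {S : Set (Fin d → ℕ)} (hS : S.Finite) : IsSemilinear' S := by
  haveI := hS.fintype
  have : S = ⋃ x : S, {(x : Fin d → ℕ)} := by
    ext y; simp
  rw [this]
  exact isSemilinear'_iUnion_linear _ fun x => isLinear'_singleton _

lemma isLinear'_add {S T : Set (Fin d → ℕ)} (hS : IsLinear' S) (hT : IsLinear' T) :
    IsLinear' (S + T) := by
  rw [isLinear'_iff] at hS hT ⊢
  obtain ⟨b₀, ι, _, g, rfl⟩ := hS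
  obtain ⟨c₀, κ, _, h, rfl⟩ := hT
  refine ⟨b₀ + c₀, ι ⊕ κ, inferInstance, Sum.elim g h, ?_⟩
  ext v
  rw [Set.mem_add]
  simp only [Set.mem_setOf_eq, Sum.elim_range, AddSubmonoid.closure_union]
  constructor
  · rintro ⟨x, ⟨t, ht, rfl⟩, y, ⟨u, hu, rfl⟩, rfl⟩
    refine ⟨t + u, ?_, by abel⟩
    exact AddSubmonoid.mem_sup.mpr ⟨t, ht, u, hu, rfl⟩
  · rintro ⟨s, hs, rfl⟩
    obtain ⟨t, ht, u, hu, rfl⟩ := AddSubmonoid.mem_sup.mp hs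
    exact ⟨b₀ + t, ⟨t, ht, rfl⟩, c₀ + u, ⟨u, hu, rfl⟩, by abel⟩

lemma isSemilinear'_add {S T : Set (Fin d → ℕ)} (hS : IsSemilinear' S)
    (hT : IsSemilinear' T) : IsSemilinear' (S + T) := by
  obtain ⟨n, U, hU, rfl⟩ := hS
  obtain ⟨m, W, hW, rfl⟩ := hT
  have : (⋃ i, U i) + (⋃ j, W j) = ⋃ p : Fin n × Fin m, (U p.1 + W p.2) := by
    rw [Set.iUnion_add]
    ext x
    simp only [Set.mem_iUnion, Set.add_iUnion]
    exact ⟨fun ⟨i, j, h⟩ => ⟨(i, j), h⟩, fun ⟨p, h⟩ => ⟨p.1, p.2, h⟩⟩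
  rw [this]
  exact isSemilinear'_iUnion_linear _ fun p => isLinear'_add (hU p.1) (hW p.2)

lemma closure_linear {S : Set (Fin d → ℕ)} (hS : IsLinear' S) :
    IsSemilinear' ((Cl S : AddSubmonoid (Fin d → ℕ)) : Set (Fin d → ℕ)) := by
  rw [isLinear'_iff] at hS
  obtain ⟨b₀, ι, _, g, rfl⟩ := hS
  set g' : Unit ⊕ ι → Fin d → ℕ := Sum.elim (fun _ => b₀) g with hg'
  have hb₀ : b₀ ∈ Cl (Set.range g') := AddSubmonoid.subset_closure ⟨Sum.inl (), rfl⟩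
  have hgle : Cl (Set.range g) ≤ Cl (Set.range g') :=
    AddSubmonoid.closure_mono (by rintro _ ⟨i, rfl⟩; exact ⟨Sum.inr i, rfl⟩)
  have key : ((Cl {v | ∃ t ∈ Cl (Set.range g), v = b₀ + t} : AddSubmonoid (Fin d → ℕ)) :
      Set (Fin d → ℕ)) = {0} ∪ {v | ∃ t ∈ Cl (Set.range g'), v = b₀ + t} := by
    apply Set.Subset.antisymm
    · intro x hx
      induction hx using AddSubmonoid.closure_induction with
      | mem y hy =>
        obtain ⟨t, ht, rfl⟩ := hy
        exact Or.inr ⟨t, hgle ht, rfl⟩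
      | zero => exact Or.inl rfl
      | add x y hx hy ihx ihy =>
        rcases ihx with rfl | ⟨t, ht, rfl⟩
        · rw [zero_add]; exact ihy
        · rcases ihy with rfl | ⟨u, hu, rfl⟩
          · rw [add_zero]; exact Or.inr ⟨t, ht, rfl⟩
          · exact Or.inr ⟨t + (b₀ + u), AddSubmonoid.add_mem _ ht (AddSubmonoid.add_mem _ hb₀ hu),
              by abel⟩
    · rintro x (rfl | ⟨t, ht, rfl⟩)
      · exact AddSubmonoid.zero_mem _
      · have hrange : Set.range g' = {b₀} ∪ Set.range g := by
          rw [hg', Sum.elim_range]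
          congr 1
          ext x; simp [eq_comm]
        rw [hrange, AddSubmonoid.closure_union] at ht
        obtain ⟨a, ha, u, hu, rfl⟩ := AddSubmonoid.mem_sup.mp ht
        obtain ⟨n, rfl⟩ := AddSubmonoid.mem_closure_singleton.mp ha
        have h1 : b₀ + u ∈ Cl {v | ∃ t ∈ Cl (Set.range g), v = b₀ + t} :=
          AddSubmonoid.subset_closure ⟨u, hu, rfl⟩
        have h2 : b₀ ∈ Cl {v | ∃ t ∈ Cl (Set.range g), v = b₀ + t} :=
          AddSubmonoid.subset_closure ⟨0, AddSubmonoid.zero_mem _, (add_zero b₀).symm⟩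
        have : b₀ + (n • b₀ + u) = (b₀ + u) + n • b₀ := by abel
        rw [this]
        exact AddSubmonoid.add_mem _ h1 ((Cl _).nsmul_mem h2 n)
  rw [key]
  refine isSemilinear'_union (isSemilinear'_of_finite (Set.finite_singleton 0)) ?_
  refine ⟨1, fun _ => _, fun _ => ?_, (Set.iUnion_const _).symm⟩
  rw [isLinear'_iff]
  exact ⟨b₀, Unit ⊕ ι, inferInstance, g', rfl⟩

lemma closure_semilinear {S : Set (Fin d → ℕ)} (hS : IsSemilinear' S) :
    IsSemilinear' ((Cl S : AddSubmonoid (Fin d → ℕ)) : Set (Fin d → ℕ)) := by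
  obtain ⟨n, T, hT, rfl⟩ := hS
  induction n with
  | zero =>
    simp only [Set.iUnion_of_empty]
    rw [AddSubmonoid.closure_empty]
    exact isSemilinear'_of_finite (by simp [AddSubmonoid.coe_bot])
  | succ m ih =>
    have : (⋃ i : Fin (m + 1), T i) = T 0 ∪ ⋃ i : Fin m, T i.succ := by
      ext x
      simp only [Set.mem_iUnion, Set.mem_union]
      constructor
      · rintro ⟨i, hi⟩
        rcases Fin.eq_zero_or_eq_succ i with rfl | ⟨j, rfl⟩
        · exact Or.inl hi
        · exact Or.inr ⟨j, hi⟩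
      · rintro (h | ⟨j, hj⟩)
        · exact ⟨0, h⟩
        · exact ⟨j.succ, hj⟩
    rw [this, AddSubmonoid.closure_union]
    have hsup : ((Cl (T 0) ⊔ Cl (⋃ i : Fin m, T i.succ) : AddSubmonoid (Fin d → ℕ)) :
        Set (Fin d → ℕ)) = (Cl (T 0) : Set (Fin d → ℕ)) + (Cl (⋃ i : Fin m, T i.succ) :
        Set (Fin d → ℕ)) := by
      ext x
      rw [Set.mem_add]
      exact ⟨fun h => by
        obtain ⟨y, hy, z, hz, rfl⟩ := AddSubmonoid.mem_sup.mp h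
        exact ⟨y, hy, z, hz, rfl⟩,
        fun ⟨y, hy, z, hz, h⟩ => AddSubmonoid.mem_sup.mpr ⟨y, hy, z, hz, h⟩⟩
    rw [hsup]
    exact isSemilinear'_add (closure_linear (hT 0)) (ih _ fun i => hT i.succ)


section Trip

variable {k : ℕ} {Q : Type} (M : DFA (Fin k) Q)

/-- word `w` takes `q` to `q'` with all strictly-intermediate states in `X`. -/
def Trip (X : Set Q) : Q → Q → List (Fin k) → Prop
  | q, q', [] => q = q'
  | q, q', a :: w => (w = [] ∧ M.step q a = q') ∨ (M.step q a ∈ X ∧ Trip X (M.step q a) q' w)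

def parikh (w : List (Fin k)) : Fin k → ℕ := fun σ => w.count σ

lemma parikh_nil : parikh ([] : List (Fin k)) = 0 := by
  funext σ; simp [parikh]

lemma parikh_append (u w : List (Fin k)) : parikh (u ++ w) = parikh u + parikh w := by
  funext σ; simp [parikh, List.count_append]

def PSet (X : Set Q) (q q' : Q) : Set (Fin k → ℕ) :=
  {v | ∃ w, Trip M X q q' w ∧ v = parikh w}

variable {M}

lemma trip_mono {X X' : Set Q} (hXX : X ⊆ X') :
    ∀ {w : List (Fin k)} {q q' : Q}, Trip M X q q' w → Trip M X' q q' w := by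
  intro w
  induction w with
  | nil => intro q q' h; exact h
  | cons a w ih =>
    rintro q q' (⟨rfl, h⟩ | ⟨hmem, h⟩)
    · exact Or.inl ⟨rfl, h⟩
    · exact Or.inr ⟨hXX hmem, ih h⟩

lemma trip_append {X : Set Q} {q r q' : Q} {u w : List (Fin k)}
    (hrw : r ∈ X ∨ w = []) (hu : Trip M X q r u) (hw : Trip M X r q' w) :
    Trip M X q q' (u ++ w) := by
  induction u generalizing q with
  | nil => cases hu; exact hw
  | cons a u ih =>
    rcases hu with ⟨rfl, rfl⟩ | ⟨hmem, h⟩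
    · rcases hrw with hr | rfl
      · exact Or.inr ⟨hr, hw⟩
      · cases hw; exact Or.inl ⟨rfl, rfl⟩
    · exact Or.inr ⟨hmem, ih h⟩

lemma trip_univ {q q' : Q} {w : List (Fin k)} :
    Trip M Set.univ q q' w ↔ M.evalFrom q w = q' := by
  induction w generalizing q with
  | nil => simp [Trip, DFA.evalFrom]
  | cons a w ih =>
    have hev : M.evalFrom q (a :: w) = M.evalFrom (M.step q a) w := rfl
    rw [hev]
    constructor
    · rintro (⟨rfl, rfl⟩ | ⟨-, h⟩)
      · rfl
      · exact ih.mp h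
    · intro h
      exact Or.inr ⟨Set.mem_univ _, ih.mpr h⟩

lemma trip_split_first {X : Set Q} {r q' : Q} :
    ∀ {w : List (Fin k)} {q : Q}, Trip M (insert r X) q q' w →
      Trip M X q q' w ∨ ∃ u w', w = u ++ w' ∧ u ≠ [] ∧ Trip M X q r u ∧
        Trip M (insert r X) r q' w' := by
  intro w
  induction w with
  | nil => intro q h; exact Or.inl h
  | cons a w ih =>
    rintro q (⟨rfl, h⟩ | ⟨hmem, h⟩)
    · exact Or.inl (Or.inl ⟨rfl, h⟩)
    · by_cases hr : M.step q a = r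
      · refine Or.inr ⟨[a], w, rfl, by simp, Or.inl ⟨rfl, hr⟩, ?_⟩
        rwa [hr] at h
      · have hX : M.step q a ∈ X := by
          rcases Set.mem_insert_iff.mp hmem with h' | h'
          · exact absurd h' hr
          · exact h'
        rcases ih h with h' | ⟨u, w', rfl, hne, h1, h2⟩
        · exact Or.inl (Or.inr ⟨hX, h'⟩)
        · exact Or.inr ⟨a :: u, w', rfl, by simp, Or.inr ⟨hX, h1⟩, h2⟩

open Pointwise in
lemma loop_mem {X : Set Q} {r q' : Q} :
    ∀ (w : List (Fin k)), Trip M (insert r X) r q' w →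
      parikh w ∈ ((Cl (PSet M X r r) : AddSubmonoid (Fin k → ℕ)) : Set (Fin k → ℕ))
        + PSet M X r q' := by
  suffices H : ∀ (n : ℕ) (w : List (Fin k)), w.length ≤ n → Trip M (insert r X) r q' w →
      parikh w ∈ ((Cl (PSet M X r r) : AddSubmonoid (Fin k → ℕ)) : Set (Fin k → ℕ))
        + PSet M X r q' by
    intro w hw
    exact H w.length w le_rfl hw
  intro n
  induction n with
  | zero =>
    intro w hlen hw
    rcases trip_split_first hw with h | ⟨u, w', rfl, hne, h1, h2⟩
    · exact Set.mem_add.mpr ⟨0, AddSubmonoid.zero_mem _, parikh w, ⟨w, h, rfl⟩, zero_add _⟩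
    · have : 0 < u.length := List.length_pos_iff.mpr hne
      rw [List.length_append] at hlen
      omega
  | succ n ih =>
    intro w hlen hw
    rcases trip_split_first hw with h | ⟨u, w', rfl, hne, h1, h2⟩
    · exact Set.mem_add.mpr ⟨0, AddSubmonoid.zero_mem _, parikh w, ⟨w, h, rfl⟩, zero_add _⟩
    · have hpos : 0 < u.length := List.length_pos_iff.mpr hne
      have hle : w'.length ≤ n := by
        rw [List.length_append] at hlen
        omega
      obtain ⟨s, hs, t, ht, hst⟩ := Set.mem_add.mp (ih w' hle h2)
      refine Set.mem_add.mpr ⟨parikh u + s,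
        AddSubmonoid.add_mem _ (AddSubmonoid.subset_closure ⟨u, h1, rfl⟩) hs, t, ht, ?_⟩
      rw [parikh_append, ← hst]
      abel

open Pointwise in
lemma loops_concat {X : Set Q} {r : Q} {s : Fin k → ℕ}
    (hs : s ∈ Cl (PSet M X r r)) :
    ∃ w, Trip M (insert r X) r r w ∧ s = parikh w := by
  induction hs using AddSubmonoid.closure_induction with
  | mem x hx =>
    obtain ⟨w, hw, rfl⟩ := hx
    exact ⟨w, trip_mono (Set.subset_insert r X) hw, rfl⟩
  | zero => exact ⟨[], rfl, parikh_nil.symm⟩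
  | add x y hx hy ihx ihy =>
    obtain ⟨w, hw, rfl⟩ := ihx
    obtain ⟨w', hw', rfl⟩ := ihy
    exact ⟨w ++ w', trip_append (Or.inl (Set.mem_insert r X)) hw hw',
      (parikh_append w w').symm⟩

open Pointwise in
lemma pset_insert (X : Set Q) (r q q' : Q) :
    PSet M (insert r X) q q' = PSet M X q q' ∪
      (PSet M X q r + (((Cl (PSet M X r r) : AddSubmonoid (Fin k → ℕ)) : Set (Fin k → ℕ))
        + PSet M X r q')) := by
  ext v
  constructor
  · rintro ⟨w, hw, rfl⟩
    rcases trip_split_first hw with h | ⟨u, w', rfl, hne, h1, h2⟩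
    · exact Or.inl ⟨w, h, rfl⟩
    · refine Or.inr (Set.mem_add.mpr ⟨parikh u, ⟨u, h1, rfl⟩, _, loop_mem w' h2, ?_⟩)
      rw [parikh_append]
  · rintro (⟨w, hw, rfl⟩ | h)
    · exact ⟨w, trip_mono (Set.subset_insert r X) hw, rfl⟩
    · obtain ⟨v₁, ⟨u, hu, rfl⟩, x, hx, rfl⟩ := Set.mem_add.mp h
      obtain ⟨s, hs, v₃, ⟨w₃, hw₃, rfl⟩, rfl⟩ := Set.mem_add.mp hx
      obtain ⟨wₛ, hwₛ, rfl⟩ := loops_concat hs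
      refine ⟨u ++ (wₛ ++ w₃), ?_, ?_⟩
      · exact trip_append (Or.inl (Set.mem_insert r X))
          (trip_mono (Set.subset_insert r X) hu)
          (trip_append (Or.inl (Set.mem_insert r X)) hwₛ
            (trip_mono (Set.subset_insert r X) hw₃))
      · rw [parikh_append, parikh_append]

lemma pset_empty_semilinear (q q' : Q) : IsSemilinear' (PSet M (∅ : Set Q) q q') := by
  apply isSemilinear'_of_finite
  apply Set.Finite.subset (Set.Finite.union (Set.finite_singleton (0 : Fin k → ℕ))
    (Set.finite_range fun a : Fin k => parikh [a]))
  rintro v ⟨w, hw, rfl⟩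
  cases w with
  | nil => exact Or.inl (by simp [parikh_nil])
  | cons a w =>
    rcases hw with ⟨rfl, -⟩ | ⟨h, -⟩
    · exact Or.inr ⟨a, rfl⟩
    · exact absurd h (Set.notMem_empty _)

lemma pset_semilinear [Fintype Q] (s : Finset Q) (q q' : Q) :
    IsSemilinear' (PSet M (↑s : Set Q) q q') := by
  classical
  induction s using Finset.induction_on generalizing q q' with
  | empty => simpa using pset_empty_semilinear q q'
  | @insert r s hrs ih =>
    rw [Finset.coe_insert, pset_insert]
    exact isSemilinear'_union (ih q q')
      (isSemilinear'_add (ih q r)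
        (isSemilinear'_add (closure_semilinear (ih r r)) (ih r q')))

end Trip

end ParikhAux

namespace ParikhAux

lemma isSemilinear_of' {d : ℕ} {S : Set (Fin d → ℕ)} (h : IsSemilinear' S) :
    IsSemilinear S := by
  obtain ⟨n, T, hT, rfl⟩ := h
  exact ⟨n, T, fun i => hT i, rfl⟩

end ParikhAux


/-- Parikh's theorem for regular languages: the Parikh image of a regular language
over the alphabet `Fin k` is semi-linear. -/
theorem parikh_image_of_regular_semilinear {k : ℕ} (L : Language (Fin k))
    (hL : L.IsRegular) :
    IsSemilinear {v : Fin k → ℕ | ∃ w ∈ L, v = fun σ => w.count σ} := by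
  classical
  obtain ⟨Q, fQ, M, rfl⟩ := hL
  haveI := fQ
  have key : {v : Fin k → ℕ | ∃ w ∈ M.accepts, v = fun σ => w.count σ}
      = ⋃ q' : Q, (if q' ∈ M.accept then ParikhAux.PSet M Set.univ M.start q' else ∅) := by
    ext v
    simp only [Set.mem_setOf_eq, Set.mem_iUnion]
    constructor
    · rintro ⟨w, hw, rfl⟩
      refine ⟨M.evalFrom M.start w, ?_⟩
      rw [if_pos (show M.evalFrom M.start w ∈ M.accept from hw)]
      exact ⟨w, ParikhAux.trip_univ.mpr rfl, rfl⟩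
    · rintro ⟨q', hv⟩
      split_ifs at hv with hq'
      · obtain ⟨w, hw, rfl⟩ := hv
        refine ⟨w, ?_, rfl⟩
        show M.evalFrom M.start w ∈ M.accept
        rw [ParikhAux.trip_univ.mp hw]
        exact hq'
      · exact absurd hv (Set.notMem_empty _)
  rw [key]
  apply ParikhAux.isSemilinear_of'
  apply ParikhAux.isSemilinear'_iUnion
  intro q'
  split_ifs
  · rw [← Finset.coe_univ]
    exact ParikhAux.pset_semilinear Finset.univ M.start q'
  · exact ParikhAux.isSemilinear'_empty
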